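/- arXiv:1304.6707 — 2 statements merged into one kernel-verified Lean document; each statement's English description precedes it below -/
import Mathlib

section
/- Let ε > 0 and set q = (1+ε)^{1/(n+1)}. Let L be a real number, let k be an integer with k ≥ n such that τ′(v_n, q^k) ≤ L < τ′(v_n, q^{k+1}), and let a be a nonnegative integer such that τ(v_n, a) ≤ L < τ(v_n, a+1). Then (1+ε)^{−1} ≤ a/q^k ≤ 1+ε. -/
open scoped BigOperators

/-- `IsWalk src dst u v p` : the list of edges `p` forms a directed walk from `u` to `v`
in the multigraph whose edges `e` go from `src e` to `dst e`. -/
def IsWalk {V E : Type} (src dst : E → V) : V → V → List E → Prop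
  | u, v, [] => u = v
  | u, v, e :: p => src e = u ∧ IsWalk src dst (dst e) v p

/-- `tau src dst w s v a` : the smallest threshold `L ∈ ℝ` (as an element of
`ℝ ∪ {−∞, +∞}`) such that at least `a` directed `s`–`v` paths have weight at most `L`;
it is `−∞` when `a ≤ 0` and `+∞` when `a` exceeds the total number of `s`–`v` paths. -/
noncomputable def tau {V E : Type} (src dst : E → V) (w : E → ℝ) (s v : V) (a : ℝ) : EReal :=
  sInf {x : EReal | ∃ L : ℝ, x = (L : EReal) ∧
    a ≤ (Nat.card {p : List E // IsWalk src dst s v p ∧ (p.map w).sum ≤ L} : ℝ)}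


set_option linter.unusedSectionVars false
set_option linter.unusedVariables false
set_option maxHeartbeats 1000000

lemma isWalk_nil_iff {V E : Type} (src dst : E → V) (u v : V) :
    IsWalk src dst u v [] ↔ u = v := Iff.rfl

lemma isWalk_cons_iff {V E : Type} (src dst : E → V) (u v : V) (e : E) (p : List E) :
    IsWalk src dst u v (e :: p) ↔ src e = u ∧ IsWalk src dst (dst e) v p := Iff.rfl

lemma isWalk_append_singleton {V E : Type} (src dst : E → V) :
    ∀ (p : List E) (u : V) (e : E) (v : V),
      IsWalk src dst u v (p ++ [e]) ↔ IsWalk src dst u (src e) p ∧ dst e = v := by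
  intro p
  induction p with
  | nil => intro u e v
           simp [isWalk_cons_iff, isWalk_nil_iff, eq_comm]
  | cons f p ih =>
      intro u e v
      simp only [List.cons_append, isWalk_cons_iff, ih, and_assoc]

lemma isWalk_length_le {n : ℕ} {E : Type} (src dst : E → Fin n)
    (htopo : ∀ e, src e < dst e) :
    ∀ (p : List E) (u v : Fin n), IsWalk src dst u v p → (u : ℕ) + p.length ≤ (v : ℕ) := by
  intro p
  induction p with
  | nil => rintro u v (rfl : u = v); simp
  | cons e p ih =>
      rintro u v ⟨rfl, h2⟩
      have h3 := ih (dst e) v h2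
      have h4 := htopo e
      simp only [List.length_cons]
      omega

section Counting

variable {n : ℕ} (hn : 0 < n) {E : Type} [Fintype E]
  (src dst : E → Fin n) (w : E → ℝ)

/-- The number of walks from the source to `v` of weight at most `L`. -/
noncomputable def Ncount (v : Fin n) (L : ℝ) : ℕ :=
  Nat.card {p : List E // IsWalk src dst ⟨0, hn⟩ v p ∧ (p.map w).sum ≤ L}

lemma wset_finite (htopo : ∀ e, src e < dst e) (v : Fin n) (L : ℝ) :
    {p : List E | IsWalk src dst ⟨0, hn⟩ v p ∧ (p.map w).sum ≤ L}.Finite := by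
  apply Set.Finite.subset (List.finite_length_le E n)
  intro p hp
  have := isWalk_length_le src dst htopo p _ _ hp.1
  simp only [Set.mem_setOf_eq]
  have := v.isLt
  omega

lemma tau_eq (v : Fin n) (a : ℝ) :
    tau src dst w ⟨0, hn⟩ v a
      = sInf {x : EReal | ∃ L : ℝ, x = (L : EReal) ∧ a ≤ (Ncount hn src dst w v L : ℝ)} := rfl

lemma Ncount_mono (htopo : ∀ e, src e < dst e) (v : Fin n) {L L' : ℝ} (h : L ≤ L') :
    Ncount hn src dst w v L ≤ Ncount hn src dst w v L' := by
  apply Nat.card_mono (wset_finite hn src dst w htopo v L')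
  intro p hp
  exact ⟨hp.1, hp.2.trans h⟩

lemma Ncount_right_const (htopo : ∀ e, src e < dst e) (v : Fin n) (L : ℝ) :
    ∃ L' : ℝ, L < L' ∧ Ncount hn src dst w v L' = Ncount hn src dst w v L := by
  classical
  have hfin : {p : List E | IsWalk src dst ⟨0, hn⟩ v p}.Finite := by
    apply Set.Finite.subset (List.finite_length_le E n)
    intro p hp
    have := isWalk_length_le src dst htopo p _ _ hp
    have := v.isLt
    simp only [Set.mem_setOf_eq]; omega
  have hfin2 : ((fun p : List E => (p.map w).sum) '' {p | IsWalk src dst ⟨0, hn⟩ v p}).Finite :=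
    hfin.image _
  set S : Finset ℝ := hfin2.toFinset with hS
  set U : Finset ℝ := S.filter (fun t => L < t) with hU
  have key : ∀ L' : ℝ, L < L' → (∀ t ∈ U, L' < t) →
      Ncount hn src dst w v L' = Ncount hn src dst w v L := by
    intro L' hL' hUL'
    unfold Ncount
    have hset : {p : List E | IsWalk src dst ⟨0, hn⟩ v p ∧ (p.map w).sum ≤ L'}
        = {p : List E | IsWalk src dst ⟨0, hn⟩ v p ∧ (p.map w).sum ≤ L} := by
      ext p
      constructor
      · rintro ⟨h1, h2⟩
        refine ⟨h1, ?_⟩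
        by_contra hgt
        push_neg at hgt
        have hmem : (p.map w).sum ∈ U := by
          rw [hU, Finset.mem_filter]
          refine ⟨?_, hgt⟩
          rw [hS, Set.Finite.mem_toFinset]
          exact ⟨p, h1, rfl⟩
        exact absurd h2 (not_le.2 (hUL' _ hmem))
      · rintro ⟨h1, h2⟩
        exact ⟨h1, h2.trans hL'.le⟩
    rw [← Set.coe_setOf, ← Set.coe_setOf, hset]
  rcases U.eq_empty_or_nonempty with hUe | hUne
  · exact ⟨L + 1, by linarith, key _ (by linarith) (by simp [hUe])⟩
  · set m := U.min' hUne with hm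
    have hLm : L < m := (Finset.mem_filter.1 (U.min'_mem hUne)).2
    refine ⟨(L + m) / 2, by linarith, key _ (by linarith) ?_⟩
    intro t ht
    have := U.min'_le t ht
    linarith

lemma tau_le_coe_iff (htopo : ∀ e, src e < dst e) (v : Fin n) (a : ℝ) (L : ℝ) :
    tau src dst w ⟨0, hn⟩ v a ≤ (L : EReal) ↔ a ≤ (Ncount hn src dst w v L : ℝ) := by
  rw [tau_eq]
  constructor
  · intro h
    by_contra hc
    push_neg at hc
    obtain ⟨L', hLL', hNL'⟩ := Ncount_right_const hn src dst w htopo v L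
    have hlb : ((L' : EReal)) ≤ sInf {x : EReal | ∃ M : ℝ, x = (M : EReal) ∧
        a ≤ (Ncount hn src dst w v M : ℝ)} := by
      apply le_sInf
      rintro x ⟨M, rfl, hM⟩
      by_contra hMc
      push_neg at hMc
      rw [EReal.coe_lt_coe_iff] at hMc
      have : Ncount hn src dst w v M ≤ Ncount hn src dst w v L := by
        rw [← hNL']
        exact Ncount_mono hn src dst w htopo v hMc.le
      have : (Ncount hn src dst w v M : ℝ) ≤ (Ncount hn src dst w v L : ℝ) := by
        exact_mod_cast this
      linarith
    have := hlb.trans h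
    rw [EReal.coe_le_coe_iff] at this
    linarith
  · intro h
    exact sInf_le ⟨L, rfl, h⟩

end Counting

section Counting2

variable {n : ℕ} (hn : 0 < n) {E : Type} [Fintype E]
  (src dst : E → Fin n) (w : E → ℝ)

lemma Ncount_source (htopo : ∀ e, src e < dst e) (L : ℝ) :
    Ncount hn src dst w ⟨0, hn⟩ L = if 0 ≤ L then 1 else 0 := by
  have hwalk : ∀ p : List E, IsWalk src dst ⟨0, hn⟩ ⟨0, hn⟩ p → p = [] := by
    intro p hp
    cases p with
    | nil => rfl
    | cons e p =>
        obtain ⟨h1, h2⟩ := hp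
        have h3 := isWalk_length_le src dst htopo p _ _ h2
        have h4 := htopo e
        rw [Fin.lt_def, h1] at h4
        simp only [Fin.val_mk] at h3 h4
        omega
  unfold Ncount
  rw [← Set.coe_setOf, Nat.card_coe_set_eq]
  split_ifs with h
  · have hs : {p : List E | IsWalk src dst ⟨0, hn⟩ ⟨0, hn⟩ p ∧ (p.map w).sum ≤ L}
        = {([] : List E)} := by
      ext p
      simp only [Set.mem_setOf_eq, Set.mem_singleton_iff]
      constructor
      · rintro ⟨h1, _⟩; exact hwalk p h1
      · rintro rfl
        exact ⟨rfl, by simpa using h⟩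
    rw [hs, Set.ncard_singleton]
  · have hs : {p : List E | IsWalk src dst ⟨0, hn⟩ ⟨0, hn⟩ p ∧ (p.map w).sum ≤ L}
        = (∅ : Set (List E)) := by
      ext p
      simp only [Set.mem_setOf_eq, Set.mem_empty_iff_false, iff_false, not_and]
      intro h1
      have := hwalk p h1
      subst this
      simpa using h
    rw [hs, Set.ncard_empty]

lemma Ncount_decomp (htopo : ∀ e, src e < dst e) (v : Fin n) (hv : v ≠ ⟨0, hn⟩) (L : ℝ) :
    Ncount hn src dst w v L
      = ∑ e ∈ Finset.univ.filter (fun e => dst e = v),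
          Ncount hn src dst w (src e) (L - w e) := by
  classical
  have hfin : ∀ (u : Fin n) (M : ℝ),
      Finite {p : List E // IsWalk src dst ⟨0, hn⟩ u p ∧ (p.map w).sum ≤ M} := by
    intro u M
    rw [← Set.coe_setOf]
    exact (wset_finite hn src dst w htopo u M).to_subtype
  letI : ∀ e : {e : E // dst e = v},
      Finite {p : List E // IsWalk src dst ⟨0, hn⟩ (src e.1) p ∧ (p.map w).sum ≤ L - w e.1} :=
    fun e => hfin _ _
  set Φ : (Σ e : {e : E // dst e = v},
        {p : List E // IsWalk src dst ⟨0, hn⟩ (src e.1) p ∧ (p.map w).sum ≤ L - w e.1})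
      → {p : List E // IsWalk src dst ⟨0, hn⟩ v p ∧ (p.map w).sum ≤ L} :=
    fun x => ⟨x.2.1 ++ [x.1.1], by
      obtain ⟨⟨e, he⟩, p, hp1, hp2⟩ := x
      refine ⟨(isWalk_append_singleton src dst p _ e v).2 ⟨hp1, he⟩, ?_⟩
      simp only [List.map_append, List.sum_append, List.map_cons, List.map_nil,
        List.sum_cons, List.sum_nil]
      linarith⟩ with hΦ
  have hbij : Function.Bijective Φ := by
    constructor
    · rintro ⟨⟨e, he⟩, p, hp⟩ ⟨⟨e', he'⟩, p', hp'⟩ h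
      have h2 : p ++ [e] = p' ++ [e'] := congrArg Subtype.val h
      have h3 : e = e' ∧ p = p' := by
        have := congrArg List.reverse h2
        simp only [List.reverse_append, List.reverse_cons, List.reverse_nil,
          List.nil_append, List.singleton_append, List.cons.injEq] at this
        exact ⟨this.1, by simpa using congrArg List.reverse this.2⟩
      obtain ⟨rfl, rfl⟩ := h3
      rfl
    · rintro ⟨q, hq1, hq2⟩
      rcases List.eq_nil_or_concat q with rfl | ⟨p, e, rfl⟩
      · exact absurd ((isWalk_nil_iff src dst _ _).1 hq1).symm hv
      · rw [List.concat_eq_append] at hq1 hq2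
        obtain ⟨hw, hd⟩ := (isWalk_append_singleton src dst p _ e v).1 hq1
        have hsum : (p.map w).sum ≤ L - w e := by
          simp only [List.map_append, List.sum_append, List.map_cons, List.map_nil,
            List.sum_cons, List.sum_nil] at hq2
          linarith
        exact ⟨⟨⟨e, hd⟩, p, hw, hsum⟩, Subtype.ext (by simp [hΦ, List.concat_eq_append])⟩
  have hcard := Nat.card_eq_of_bijective Φ hbij
  unfold Ncount
  rw [← hcard]
  letI : ∀ e : {e : E // dst e = v},
      Fintype {p : List E // IsWalk src dst ⟨0, hn⟩ (src e.1) p ∧ (p.map w).sum ≤ L - w e.1} :=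
    fun e => Fintype.ofFinite _
  rw [Nat.card_eq_fintype_card, Fintype.card_sigma]
  rw [Finset.sum_subtype (Finset.univ.filter (fun e => dst e = v))
    (p := fun e => dst e = v) (by simp)
    (fun e => Nat.card {p : List E // IsWalk src dst ⟨0, hn⟩ (src e) p ∧ (p.map w).sum ≤ L - w e})]
  exact Finset.sum_congr rfl (fun e _ => (Nat.card_eq_fintype_card).symm)

end Counting2
section Main

variable {n : ℕ} (hn : 0 < n) {E : Type} [Fintype E]
  (src dst : E → Fin n) (w : E → ℝ) (q : ℝ)

lemma tau_source_zero (hq : 1 < q) (htopo : ∀ e, src e < dst e) {j : ℤ} (hj : j ≤ 0) :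
    tau src dst w ⟨0, hn⟩ ⟨0, hn⟩ (q ^ j) = 0 := by
  have hq0 : (0 : ℝ) < q := lt_trans one_pos hq
  refine le_antisymm ?_ ?_
  · have : tau src dst w ⟨0, hn⟩ ⟨0, hn⟩ (q ^ j) ≤ ((0 : ℝ) : EReal) := by
      rw [tau_le_coe_iff hn src dst w htopo]
      rw [Ncount_source hn src dst w htopo, if_pos le_rfl]
      exact_mod_cast zpow_le_one_of_nonpos₀ hq.le hj
    simpa using this
  · rw [tau_eq]
    apply le_sInf
    rintro x ⟨M, rfl, hM⟩
    have hM0 : 0 ≤ M := by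
      by_contra h0
      push_neg at h0
      rw [Ncount_source hn src dst w htopo, if_neg (not_le.2 h0)] at hM
      have := zpow_pos hq0 j
      simp only [Nat.cast_zero] at hM
      linarith
    exact_mod_cast hM0

lemma tau_source_top (hq : 1 < q) (htopo : ∀ e, src e < dst e) {j : ℤ} (hj : 0 < j) :
    tau src dst w ⟨0, hn⟩ ⟨0, hn⟩ (q ^ j) = ⊤ := by
  rw [tau_eq]
  have hempty : {x : EReal | ∃ L : ℝ, x = (L : EReal) ∧
      (q ^ j : ℝ) ≤ (Ncount hn src dst w ⟨0, hn⟩ L : ℝ)} = ∅ := by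
    ext x
    simp only [Set.mem_setOf_eq, Set.mem_empty_iff_false, iff_false, not_exists]
    rintro M ⟨rfl, hM⟩
    have h1 : (Ncount hn src dst w ⟨0, hn⟩ M : ℝ) ≤ 1 := by
      rw [Ncount_source hn src dst w htopo]
      split_ifs <;> norm_num
    have := one_lt_zpow₀ hq hj
    linarith
  rw [hempty, sInf_empty]

end Main
section MainA

variable {n : ℕ} (hn : 0 < n) {E : Type} [Fintype E]
  (src dst : E → Fin n) (w : E → ℝ) (q : ℝ) (T : Fin n → ℝ → EReal)

lemma lemA_src (hq : 1 < q) (htopo : ∀ e, src e < dst e)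
    (hTs1 : ∀ a : ℝ, 0 < a → a ≤ 1 → T ⟨0, hn⟩ a = 0)
    (hTs2 : ∀ a : ℝ, 1 < a → T ⟨0, hn⟩ a = ⊤)
    (j : ℤ) :
    T ⟨0, hn⟩ (q ^ j) ≤ tau src dst w ⟨0, hn⟩ ⟨0, hn⟩ (q ^ j) ∧
    tau src dst w ⟨0, hn⟩ ⟨0, hn⟩ (q ^ j) ≤ T ⟨0, hn⟩ (q ^ j) := by
  have hq0 : (0 : ℝ) < q := lt_trans one_pos hq
  rcases le_or_gt j 0 with hj | hj
  · rw [hTs1 _ (zpow_pos hq0 j) (zpow_le_one_of_nonpos₀ hq.le hj),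
      tau_source_zero hn src dst w q hq htopo hj]
    exact ⟨le_rfl, le_rfl⟩
  · rw [hTs2 _ (one_lt_zpow₀ hq hj), tau_source_top hn src dst w q hq htopo hj]
    exact ⟨le_rfl, le_rfl⟩

lemma lemA (hq : 1 < q) (htopo : ∀ e, src e < dst e)
    (hT0 : ∀ v : Fin n, T v 0 = ⊥)
    (hTs1 : ∀ a : ℝ, 0 < a → a ≤ 1 → T ⟨0, hn⟩ a = 0)
    (hTs2 : ∀ a : ℝ, 1 < a → T ⟨0, hn⟩ a = ⊤)
    (hTrec : ∀ v : Fin n, v ≠ ⟨0, hn⟩ → ∀ j : ℤ,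
      T v (q ^ j) = sInf {x : EReal |
        ∃ α : E → ℝ, (∀ e, dst e = v → 0 ≤ α e) ∧
          (∑ e ∈ Finset.univ.filter (fun e => dst e = v), α e) = 1 ∧
          x = (Finset.univ.filter (fun e => dst e = v)).sup
            (fun e => T (src e)
              (if α e = 0 then 0 else q ^ ⌊(j : ℝ) + Real.logb q (α e)⌋) + (w e : EReal))}) :
    ∀ (v : Fin n) (j : ℤ), T v (q ^ j) ≤ tau src dst w ⟨0, hn⟩ v (q ^ j) := by
  have hq0 : (0 : ℝ) < q := lt_trans one_pos hq
  suffices H : ∀ m : ℕ, ∀ v : Fin n, (v : ℕ) < m → ∀ j : ℤ,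
      T v (q ^ j) ≤ tau src dst w ⟨0, hn⟩ v (q ^ j) by
    intro v j
    exact H ((v : ℕ) + 1) v (Nat.lt_succ_self _) j
  intro m
  induction m with
  | zero => intro v hv; omega
  | succ m ih =>
    intro v hv j
    by_cases hsrc : v = ⟨0, hn⟩
    · subst hsrc
      exact (lemA_src hn src dst w q T hq htopo hTs1 hTs2 j).1
    rw [hTrec v hsrc j, tau_eq]
    apply le_sInf
    rintro x ⟨M, rfl, hM⟩
    set N0 := Ncount hn src dst w v M with hN0
    have hqj : (0 : ℝ) < q ^ j := zpow_pos hq0 j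
    have hN0pos : (0 : ℝ) < (N0 : ℝ) := lt_of_lt_of_le hqj hM
    set α : E → ℝ := fun e =>
      if dst e = v then (Ncount hn src dst w (src e) (M - w e) : ℝ) / (N0 : ℝ) else 0 with hα
    have hsum : (∑ e ∈ Finset.univ.filter (fun e => dst e = v), α e) = 1 := by
      rw [Finset.sum_congr rfl (fun e he => if_pos (Finset.mem_filter.1 he).2), ← Finset.sum_div,
        div_eq_one_iff_eq (ne_of_gt hN0pos), hN0,
        Ncount_decomp hn src dst w htopo v hsrc M]
      push_cast
      ring
    refine le_trans (sInf_le ⟨α, ?_, hsum, rfl⟩) ?_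
    · intro e he
      rw [hα]
      simp only [if_pos he]
      positivity
    · apply Finset.sup_le
      intro e he
      have hev : dst e = v := (Finset.mem_filter.1 he).2
      by_cases hz : α e = 0
      · rw [if_pos hz, hT0]
        simp only [EReal.bot_add]
        exact bot_le
      · rw [if_neg hz]
        have hαnn : 0 ≤ α e := by rw [hα]; simp only [if_pos hev]; positivity
        have hαpos : 0 < α e := lt_of_le_of_ne hαnn (Ne.symm hz)
        set jf : ℤ := ⌊(j : ℝ) + Real.logb q (α e)⌋ with hjf
        have hNe_lb : (q : ℝ) ^ jf ≤ (Ncount hn src dst w (src e) (M - w e) : ℝ) := by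
          have h1 : (q : ℝ) ^ jf = q ^ ((jf : ℝ)) := (Real.rpow_intCast q jf).symm
          have h2 : q ^ ((jf : ℝ)) ≤ q ^ ((j : ℝ) + Real.logb q (α e)) :=
            Real.rpow_le_rpow_of_exponent_le hq.le (Int.floor_le _)
          have h3 : q ^ ((j : ℝ) + Real.logb q (α e)) = q ^ j * α e := by
            rw [Real.rpow_add hq0, Real.rpow_logb hq0 hq.ne' hαpos, Real.rpow_intCast]
          have h4 : q ^ j * α e ≤ (Ncount hn src dst w (src e) (M - w e) : ℝ) := by
            have h5 : α e = (Ncount hn src dst w (src e) (M - w e) : ℝ) / (N0 : ℝ) := by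
              rw [hα]; simp only [if_pos hev]
            rw [h5]
            calc q ^ j * ((Ncount hn src dst w (src e) (M - w e) : ℝ) / (N0 : ℝ))
                ≤ (N0 : ℝ) * ((Ncount hn src dst w (src e) (M - w e) : ℝ) / (N0 : ℝ)) := by
                  apply mul_le_mul_of_nonneg_right hM
                  positivity
              _ = (Ncount hn src dst w (src e) (M - w e) : ℝ) := by
                  field_simp
          rw [h1]
          exact le_trans h2 (le_of_eq_of_le h3 h4)
        have htau : tau src dst w ⟨0, hn⟩ (src e) ((q : ℝ) ^ jf) ≤ ((M - w e : ℝ) : EReal) :=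
          (tau_le_coe_iff hn src dst w htopo (src e) _ _).2 hNe_lb
        have hsrclt : ((src e : ℕ)) < m := by
          have h6 := htopo e
          rw [Fin.lt_def, hev] at h6
          omega
        have hT : T (src e) (q ^ jf) ≤ ((M - w e : ℝ) : EReal) :=
          le_trans (ih (src e) hsrclt jf) htau
        calc T (src e) (q ^ jf) + (w e : EReal)
            ≤ ((M - w e : ℝ) : EReal) + (w e : EReal) := add_le_add_left hT _
          _ = (M : EReal) := by
              rw [← EReal.coe_add]
              norm_num

end MainA
section MainB

variable {n : ℕ} (hn : 0 < n) {E : Type} [Fintype E]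
  (src dst : E → Fin n) (w : E → ℝ) (q : ℝ) (T : Fin n → ℝ → EReal)

lemma lemB (hq : 1 < q) (htopo : ∀ e, src e < dst e)
    (hT0 : ∀ v : Fin n, T v 0 = ⊥)
    (hTs1 : ∀ a : ℝ, 0 < a → a ≤ 1 → T ⟨0, hn⟩ a = 0)
    (hTs2 : ∀ a : ℝ, 1 < a → T ⟨0, hn⟩ a = ⊤)
    (hTrec : ∀ v : Fin n, v ≠ ⟨0, hn⟩ → ∀ j : ℤ,
      T v (q ^ j) = sInf {x : EReal |
        ∃ α : E → ℝ, (∀ e, dst e = v → 0 ≤ α e) ∧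
          (∑ e ∈ Finset.univ.filter (fun e => dst e = v), α e) = 1 ∧
          x = (Finset.univ.filter (fun e => dst e = v)).sup
            (fun e => T (src e)
              (if α e = 0 then 0 else q ^ ⌊(j : ℝ) + Real.logb q (α e)⌋) + (w e : EReal))}) :
    ∀ (v : Fin n) (j : ℤ),
      tau src dst w ⟨0, hn⟩ v (q ^ (j - ((v : ℕ) : ℤ))) ≤ T v (q ^ j) := by
  have hq0 : (0 : ℝ) < q := lt_trans one_pos hq
  suffices H : ∀ m : ℕ, ∀ v : Fin n, (v : ℕ) < m → ∀ j : ℤ,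
      tau src dst w ⟨0, hn⟩ v (q ^ (j - ((v : ℕ) : ℤ))) ≤ T v (q ^ j) by
    intro v j
    exact H ((v : ℕ) + 1) v (Nat.lt_succ_self _) j
  intro m
  induction m with
  | zero => intro v hv; omega
  | succ m ih =>
    intro v hv j
    by_cases hsrc : v = ⟨0, hn⟩
    · subst hsrc
      simpa using (lemA_src hn src dst w q T hq htopo hTs1 hTs2 j).2
    rw [hTrec v hsrc j]
    apply le_sInf
    rintro x ⟨α, hα0, hα1, rfl⟩
    have claim : ∀ M : ℝ,
        (∀ e, dst e = v → T (src e)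
            (if α e = 0 then 0 else q ^ ⌊(j : ℝ) + Real.logb q (α e)⌋) + (w e : EReal)
            ≤ (M : EReal)) →
        tau src dst w ⟨0, hn⟩ v (q ^ (j - ((v : ℕ) : ℤ))) ≤ (M : EReal) := by
      intro M hterm
      rw [tau_le_coe_iff hn src dst w htopo, Ncount_decomp hn src dst w htopo v hsrc M]
      have hstep : ∀ e ∈ Finset.univ.filter (fun e => dst e = v),
          α e * q ^ (j - ((v : ℕ) : ℤ)) ≤ (Ncount hn src dst w (src e) (M - w e) : ℝ) := by
        intro e he
        have hev : dst e = v := (Finset.mem_filter.1 he).2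
        by_cases hz : α e = 0
        · rw [hz, zero_mul]
          positivity
        · have hαpos : 0 < α e := lt_of_le_of_ne (hα0 e hev) (Ne.symm hz)
          have hterm' := hterm e hev
          rw [if_neg hz] at hterm'
          set jf : ℤ := ⌊(j : ℝ) + Real.logb q (α e)⌋ with hjf
          have hTle : T (src e) (q ^ jf) ≤ ((M - w e : ℝ) : EReal) := by
            rw [EReal.coe_sub]
            rw [EReal.le_sub_iff_add_le (Or.inr (EReal.coe_ne_bot _))
              (Or.inr (EReal.coe_ne_top _))]
            exact hterm'
          have hsrclt : ((src e : ℕ)) < m := by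
            have h6 := htopo e
            rw [Fin.lt_def, hev] at h6
            omega
          have htau := le_trans (ih (src e) hsrclt jf) hTle
          rw [tau_le_coe_iff hn src dst w htopo] at htau
          -- htau : q ^ (jf - src e) ≤ Ncount (src e) (M - w e)
          refine le_trans ?_ htau
          have hexp : Real.logb q (α e) + ((j : ℝ) - ((v : ℕ) : ℤ))
              ≤ (((jf - ((src e : ℕ) : ℤ)) : ℤ) : ℝ) := by
            have h7 := Int.lt_floor_add_one ((j : ℝ) + Real.logb q (α e))
            have h8 : ((src e : ℕ)) + 1 ≤ ((v : ℕ)) := by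
              have h9 := htopo e
              rw [Fin.lt_def, hev] at h9
              omega
            have h8' : ((src e : ℕ) : ℝ) + 1 ≤ ((v : ℕ) : ℝ) := by exact_mod_cast h8
            push_cast
            push_cast at h7
            linarith
          calc α e * q ^ (j - ((v : ℕ) : ℤ))
              = q ^ (Real.logb q (α e) + ((j : ℝ) - ((v : ℕ) : ℤ))) := by
                rw [Real.rpow_add hq0, Real.rpow_logb hq0 hq.ne' hαpos]
                congr 1
                rw [← Real.rpow_intCast q (j - ((v : ℕ) : ℤ))]
                congr 1
                push_cast
                ring
            _ ≤ q ^ ((((jf - ((src e : ℕ) : ℤ)) : ℤ) : ℝ)) :=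
                Real.rpow_le_rpow_of_exponent_le hq.le hexp
            _ = q ^ (jf - ((src e : ℕ) : ℤ)) := Real.rpow_intCast q _
      calc (q : ℝ) ^ (j - ((v : ℕ) : ℤ))
          = ∑ e ∈ Finset.univ.filter (fun e => dst e = v), α e * q ^ (j - ((v : ℕ) : ℤ)) := by
            rw [← Finset.sum_mul, hα1, one_mul]
        _ ≤ ∑ e ∈ Finset.univ.filter (fun e => dst e = v),
              (Ncount hn src dst w (src e) (M - w e) : ℝ) := Finset.sum_le_sum hstep
        _ = (((∑ e ∈ Finset.univ.filter (fun e => dst e = v),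
              Ncount hn src dst w (src e) (M - w e)) : ℕ) : ℝ) := by push_cast; ring
    set x := (Finset.univ.filter (fun e => dst e = v)).sup
      (fun e => T (src e)
        (if α e = 0 then 0 else q ^ ⌊(j : ℝ) + Real.logb q (α e)⌋) + (w e : EReal)) with hx
    have hle_x : ∀ e, dst e = v → T (src e)
        (if α e = 0 then 0 else q ^ ⌊(j : ℝ) + Real.logb q (α e)⌋) + (w e : EReal) ≤ x := by
      intro e hev
      rw [hx]
      exact Finset.le_sup (f := fun e => T (src e)
          (if α e = 0 then 0 else q ^ ⌊(j : ℝ) + Real.logb q (α e)⌋) + (w e : EReal))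
        (Finset.mem_filter.2 ⟨Finset.mem_univ e, hev⟩)
    by_cases hxt : x = ⊤
    · rw [hxt]; exact le_top
    by_cases hxb : x = ⊥
    · rw [hxb]
      by_contra hbot
      have hlt : (⊥ : EReal) < tau src dst w ⟨0, hn⟩ v (q ^ (j - ((v : ℕ) : ℤ))) :=
        lt_of_not_ge hbot
      obtain ⟨M, _, hM2⟩ := EReal.exists_between_coe_real hlt
      exact absurd (claim M (fun e hev => le_trans (hle_x e hev) (by rw [hxb]; exact bot_le)))
        (not_le.2 hM2)
    · have hxM : ((x.toReal : ℝ) : EReal) = x := EReal.coe_toReal hxt hxb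
      rw [← hxM]
      exact claim x.toReal (fun e hev => le_trans (hle_x e hev) (le_of_eq hxM.symm))

end MainB

theorem stmt1
    {n : ℕ} (hn : 0 < n) {E : Type} [Fintype E]
    (src dst : E → Fin n) (w : E → ℝ)
    (htopo : ∀ e, src e < dst e)
    (hin : ∀ v : Fin n, v ≠ ⟨0, hn⟩ → ∃ e, dst e = v)
    (ε : ℝ) (hε : 0 < ε)
    (q : ℝ) (hqdef : q = (1 + ε) ^ ((1 : ℝ) / (n + 1)))
    (T : Fin n → ℝ → EReal)
    (hT0 : ∀ v : Fin n, T v 0 = ⊥)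
    (hTs1 : ∀ a : ℝ, 0 < a → a ≤ 1 → T ⟨0, hn⟩ a = 0)
    (hTs2 : ∀ a : ℝ, 1 < a → T ⟨0, hn⟩ a = ⊤)
    (hTrec : ∀ v : Fin n, v ≠ ⟨0, hn⟩ → ∀ j : ℤ,
      T v (q ^ j) = sInf {x : EReal |
        ∃ α : E → ℝ, (∀ e, dst e = v → 0 ≤ α e) ∧
          (∑ e ∈ Finset.univ.filter (fun e => dst e = v), α e) = 1 ∧
          x = (Finset.univ.filter (fun e => dst e = v)).sup
            (fun e => T (src e)
              (if α e = 0 then 0 else q ^ ⌊(j : ℝ) + Real.logb q (α e)⌋) + (w e : EReal))})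
    (L : ℝ) (k : ℤ) (hk : (n : ℤ) ≤ k)
    (hk1 : T ⟨n - 1, by omega⟩ (q ^ k) ≤ (L : EReal))
    (hk2 : (L : EReal) < T ⟨n - 1, by omega⟩ (q ^ (k + 1)))
    (a : ℕ)
    (ha1 : tau src dst w ⟨0, hn⟩ ⟨n - 1, by omega⟩ (a : ℝ) ≤ (L : EReal))
    (ha2 : (L : EReal) < tau src dst w ⟨0, hn⟩ ⟨n - 1, by omega⟩ ((a : ℝ) + 1)) :
    (1 + ε)⁻¹ ≤ (a : ℝ) / q ^ k ∧ (a : ℝ) / q ^ k ≤ 1 + ε := by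
  have hε1 : (0 : ℝ) < 1 + ε := by linarith
  have hq : 1 < q := by
    rw [hqdef, Real.one_lt_rpow_iff_of_pos hε1]
    exact Or.inl ⟨by linarith, by positivity⟩
  have hq0 : (0 : ℝ) < q := lt_trans one_pos hq
  have hqk : (0 : ℝ) < q ^ k := zpow_pos hq0 k
  have hpow : q ^ ((n : ℤ) + 1) = 1 + ε := by
    have h1 : q ^ ((n : ℤ) + 1) = q ^ ((n + 1 : ℕ)) := by
      rw [← zpow_natCast]
      norm_num
    rw [h1, hqdef, ← Real.rpow_natCast ((1 + ε) ^ ((1 : ℝ) / (n + 1))) (n + 1),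
      ← Real.rpow_mul hε1.le]
    have h2 : (1 : ℝ) / (n + 1) * ((n + 1 : ℕ) : ℝ) = 1 := by
      have : ((n + 1 : ℕ) : ℝ) = (n : ℝ) + 1 := by push_cast; ring
      rw [this]
      field_simp
    rw [h2, Real.rpow_one]
  set vn : Fin n := ⟨n - 1, by omega⟩ with hvn
  set N := Ncount hn src dst w vn L with hN
  -- lower bound on N from lemB
  have hB := lemB hn src dst w q T hq htopo hT0 hTs1 hTs2 hTrec vn k
  have hvnval : ((vn : ℕ) : ℤ) = (n : ℤ) - 1 := by
    rw [hvn]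
    simp only [Fin.val_mk]
    omega
  have hBL : tau src dst w ⟨0, hn⟩ vn (q ^ (k - ((n : ℤ) - 1))) ≤ (L : EReal) := by
    rw [← hvnval]
    exact le_trans hB hk1
  rw [tau_le_coe_iff hn src dst w htopo] at hBL
  -- N ≤ a
  have hNlea : (N : ℝ) ≤ (a : ℝ) := by
    have h3 : ¬ (tau src dst w ⟨0, hn⟩ vn ((a : ℝ) + 1) ≤ (L : EReal)) := not_le.2 ha2
    rw [tau_le_coe_iff hn src dst w htopo] at h3
    push_neg at h3
    have h4 : N < a + 1 := by exact_mod_cast h3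
    exact_mod_cast Nat.lt_succ_iff.1 h4
  -- a ≤ N
  have haleN : (a : ℝ) ≤ (N : ℝ) := by
    rw [← tau_le_coe_iff hn src dst w htopo]
    exact ha1
  -- N < q^(k+1) from lemA
  have hA := lemA hn src dst w q T hq htopo hT0 hTs1 hTs2 hTrec vn (k + 1)
  have hAL : ¬ (tau src dst w ⟨0, hn⟩ vn (q ^ (k + 1)) ≤ (L : EReal)) := by
    intro hcon
    exact absurd (lt_of_lt_of_le hk2 (le_trans hA hcon)) (lt_irrefl _)
  rw [tau_le_coe_iff hn src dst w htopo] at hAL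
  push_neg at hAL
  constructor
  · -- (1+ε)⁻¹ ≤ a / q^k
    rw [le_div_iff₀ hqk]
    have h5 : q ^ (k - ((n : ℤ) + 1)) ≤ q ^ (k - ((n : ℤ) - 1)) :=
      zpow_le_zpow_right₀ hq.le (by omega)
    have h6 : (1 + ε)⁻¹ * q ^ k = q ^ (k - ((n : ℤ) + 1)) := by
      rw [zpow_sub₀ (ne_of_gt hq0), hpow]
      field_simp
    rw [h6]
    calc q ^ (k - ((n : ℤ) + 1)) ≤ q ^ (k - ((n : ℤ) - 1)) := h5
      _ ≤ (N : ℝ) := hBL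
      _ ≤ (a : ℝ) := by exact_mod_cast hNlea
  · -- a / q^k ≤ 1 + ε
    rw [div_le_iff₀ hqk]
    have h7 : (a : ℝ) < q ^ (k + 1) := lt_of_le_of_lt haleN hAL
    have h8 : q ^ (k + 1) ≤ q ^ (k + ((n : ℤ) + 1)) :=
      zpow_le_zpow_right₀ hq.le (by omega)
    have h9 : q ^ (k + ((n : ℤ) + 1)) = (1 + ε) * q ^ k := by
      rw [zpow_add₀ (ne_of_gt hq0), hpow]
      ring
    calc (a : ℝ) ≤ q ^ (k + 1) := h7.le
      _ ≤ (1 + ε) * q ^ k := by rw [← h9]; exact h8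
end

section
/- Let v be a vertex with v ≠ s whose incoming edges come from predecessors p_1,…,p_d (with multiplicity for parallel edges) with edge weights l_1,…,l_d, and let a ≥ 1 be an integer. Then τ(v, a) = min over all tuples (a_1,…,a_d) of nonnegative integers with a_1+⋯+a_d = a of max_{1≤s≤d} ( τ(p_s, a_s) + l_s ), where the minimum over an empty set of tuples (d = 0) is +∞ and the maximum in the case a_s = 0 uses τ(p_s,0) = −∞. -/
open scoped BigOperators

section Aux

variable {V E : Type} [Fintype V] [Fintype E] [DecidableEq V]
  (src dst : E → V) (w : E → ℝ) {ord : V → ℕ}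

lemma Stmt8Aux.isWalk_concat (e : E) :
    ∀ (q : List E) (u v : V),
      IsWalk src dst u v (q ++ [e]) ↔ IsWalk src dst u (src e) q ∧ dst e = v := by
  intro q
  induction q with
  | nil => intro u v; simp [IsWalk, eq_comm]
  | cons f q ih =>
      intro u v
      simp only [List.cons_append, IsWalk, List.append_eq, ih, and_assoc]

lemma Stmt8Aux.isWalk_length (hacyc : ∀ e, ord (src e) < ord (dst e)) :
    ∀ (p : List E) (u v : V), IsWalk src dst u v p → p.length + ord u ≤ ord v := by
  intro p
  induction p with
  | nil => intro u v h; cases h; simp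
  | cons e p ih =>
      rintro u v ⟨he, hw⟩
      have := ih (dst e) v hw
      have h2 := hacyc e
      rw [he] at h2
      simp only [List.length_cons]
      omega

lemma Stmt8Aux.finite_walks (hacyc : ∀ e, ord (src e) < ord (dst e))
    (u v : V) : {p : List E | IsWalk src dst u v p}.Finite := by
  apply (List.finite_length_le E (ord v)).subset
  intro p hp
  have := Stmt8Aux.isWalk_length src dst hacyc p u v hp
  simp only [Set.mem_setOf_eq]
  omega

lemma Stmt8Aux.finite_walks_le (hacyc : ∀ e, ord (src e) < ord (dst e))
    (u v : V) (L : ℝ) : {p : List E | IsWalk src dst u v p ∧ (p.map w).sum ≤ L}.Finite :=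
  (Stmt8Aux.finite_walks src dst hacyc u v).subset (fun _ h => h.1)

lemma Stmt8Aux.Ncard_mono (hacyc : ∀ e, ord (src e) < ord (dst e)) (s u : V) {L L' : ℝ}
    (h : L ≤ L') :
    Nat.card {p : List E // IsWalk src dst s u p ∧ (p.map w).sum ≤ L} ≤
    Nat.card {p : List E // IsWalk src dst s u p ∧ (p.map w).sum ≤ L'} :=
  Nat.card_mono (Stmt8Aux.finite_walks_le src dst w hacyc s u L')
    (fun p hp => ⟨hp.1, hp.2.trans h⟩)

lemma Stmt8Aux.card_walk_decomp (hacyc : ∀ e, ord (src e) < ord (dst e))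
    (s v : V) (L : ℝ) (hv : v ≠ s) :
    Nat.card {p : List E // IsWalk src dst s v p ∧ (p.map w).sum ≤ L} =
      ∑ e ∈ Finset.univ.filter (fun e => dst e = v),
        Nat.card {q : List E // IsWalk src dst s (src e) q ∧ (q.map w).sum ≤ L - w e} := by
  have h1 : Nat.card {p : List E // IsWalk src dst s v p ∧ (p.map w).sum ≤ L} =
      Nat.card (Σ e : {e : E // dst e = v},
        {q : List E // IsWalk src dst s (src e.1) q ∧ (q.map w).sum ≤ L - w e.1}) := by
    apply (Nat.card_eq_of_bijective
      (fun x : (Σ e : {e : E // dst e = v},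
          {q : List E // IsWalk src dst s (src e.1) q ∧ (q.map w).sum ≤ L - w e.1}) =>
        (⟨x.2.1 ++ [x.1.1], (Stmt8Aux.isWalk_concat src dst x.1.1 x.2.1 s v).2 ⟨x.2.2.1, x.1.2⟩,
          by have := x.2.2.2; simp; linarith⟩ :
          {p : List E // IsWalk src dst s v p ∧ (p.map w).sum ≤ L})) ?_).symm
    constructor
    · rintro ⟨⟨e, he⟩, ⟨q, hq⟩⟩ ⟨⟨e', he'⟩, ⟨q', hq'⟩⟩ h
      simp only [Subtype.mk.injEq] at h
      obtain ⟨h1, h2⟩ := List.append_inj' h rfl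
      obtain rfl : e = e' := by simpa using h2
      obtain rfl : q = q' := h1
      rfl
    · rintro ⟨p, hp, hL⟩
      have hne : p ≠ [] := by rintro rfl; exact hv hp.symm
      have hdec := (Stmt8Aux.isWalk_concat src dst (p.getLast hne) p.dropLast s v).1
        (by rwa [List.dropLast_append_getLast hne])
      have hsum : (p.map w).sum = (p.dropLast.map w).sum + w (p.getLast hne) := by
        conv_lhs => rw [← List.dropLast_append_getLast hne]
        simp
      refine ⟨⟨⟨p.getLast hne, hdec.2⟩, ⟨p.dropLast, hdec.1, by linarith⟩⟩, ?_⟩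
      exact Subtype.ext (List.dropLast_append_getLast hne)
  rw [h1]
  letI : ∀ e : {e : E // dst e = v},
      Fintype {q : List E // IsWalk src dst s (src e.1) q ∧ (q.map w).sum ≤ L - w e.1} :=
    fun e => (Stmt8Aux.finite_walks_le src dst w hacyc s (src e.1) (L - w e.1)).fintype
  rw [Nat.card_eq_fintype_card, Fintype.card_sigma]
  have hs := Finset.sum_subtype (Finset.univ.filter (fun e => dst e = v))
    (p := fun e => dst e = v) (F := Subtype.fintype _) (by simp)
    (fun e => Nat.card {q : List E // IsWalk src dst s (src e) q ∧ (q.map w).sum ≤ L - w e})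
  rw [hs]
  exact Finset.sum_congr rfl fun e _ => Nat.card_eq_fintype_card.symm

lemma Stmt8Aux.exists_least (hacyc : ∀ e, ord (src e) < ord (dst e)) (s u : V) (b : ℕ)
    (hb : 1 ≤ b)
    (hne : {L : ℝ | (b:ℝ) ≤ (Nat.card {p : List E // IsWalk src dst s u p ∧ (p.map w).sum ≤ L} : ℝ)}.Nonempty) :
    ∃ M : ℝ, IsLeast {L : ℝ | (b:ℝ) ≤ (Nat.card {p : List E // IsWalk src dst s u p ∧ (p.map w).sum ≤ L} : ℝ)} M := by
  set A := {L : ℝ | (b:ℝ) ≤ (Nat.card {p : List E // IsWalk src dst s u p ∧ (p.map w).sum ≤ L} : ℝ)} with hA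
  have memA : ∀ L : ℝ, L ∈ A ↔ b ≤ Nat.card {p : List E // IsWalk src dst s u p ∧ (p.map w).sum ≤ L} := by
    intro L; rw [hA]; simp [Nat.cast_le]
  have path_of_mem : ∀ L ∈ A, ∃ p : List E, IsWalk src dst s u p ∧ (p.map w).sum ≤ L := by
    intro L hL
    rw [memA] at hL
    have hpos : 0 < Nat.card {p : List E // IsWalk src dst s u p ∧ (p.map w).sum ≤ L} :=
      lt_of_lt_of_le hb hL
    obtain ⟨⟨p, hp⟩⟩ := (Nat.card_pos_iff.1 hpos).1
    exact ⟨p, hp⟩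
  obtain ⟨L₀, hL₀⟩ := hne
  have hWfin : ((fun p : List E => (p.map w).sum) '' {p | IsWalk src dst s u p}).Finite :=
    (Stmt8Aux.finite_walks src dst hacyc s u).image _
  set Wf := hWfin.toFinset with hWf
  have memWf : ∀ p : List E, IsWalk src dst s u p → (p.map w).sum ∈ Wf := by
    intro p hp
    rw [hWf, Set.Finite.mem_toFinset]
    exact ⟨p, hp, rfl⟩
  obtain ⟨p₀, hp₀, hp₀L⟩ := path_of_mem L₀ hL₀
  have hWne : Wf.Nonempty := ⟨_, memWf p₀ hp₀⟩
  have lb : ∀ L ∈ A, Wf.min' hWne ≤ L := by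
    intro L hL
    obtain ⟨p, hp, hpL⟩ := path_of_mem L hL
    exact le_trans (Wf.min'_le _ (memWf p hp)) hpL
  have hbdd : BddBelow A := ⟨_, lb⟩
  have hAne : A.Nonempty := ⟨L₀, hL₀⟩
  refine ⟨sInf A, ?_, fun L hL => csInf_le hbdd hL⟩
  set M := sInf A with hM
  rw [memA]
  have key : ∃ L' ∈ A, {p : List E | IsWalk src dst s u p ∧ (p.map w).sum ≤ L'} ⊆
      {p : List E | IsWalk src dst s u p ∧ (p.map w).sum ≤ M} := by
    by_cases hB : (Wf.filter (fun x => M < x)).Nonempty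
    · set m' := (Wf.filter (fun x => M < x)).min' hB with hm'
      have hMm' : M < m' := (Finset.mem_filter.1 ((Wf.filter (fun x => M < x)).min'_mem hB)).2
      obtain ⟨L', hL'A, hL'⟩ := exists_lt_of_csInf_lt hAne hMm'
      refine ⟨L', hL'A, fun p hp => ⟨hp.1, ?_⟩⟩
      by_contra hgt
      push_neg at hgt
      have : m' ≤ (p.map w).sum :=
        (Wf.filter (fun x => M < x)).min'_le _ (Finset.mem_filter.2 ⟨memWf p hp.1, hgt⟩)
      linarith [hp.2]
    · refine ⟨L₀, hL₀, fun p hp => ⟨hp.1, ?_⟩⟩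
      by_contra hgt
      push_neg at hgt
      exact hB ⟨_, Finset.mem_filter.2 ⟨memWf p hp.1, hgt⟩⟩
  obtain ⟨L', hL'A, hsub⟩ := key
  rw [memA] at hL'A
  exact le_trans hL'A (Nat.card_mono (Stmt8Aux.finite_walks_le src dst w hacyc s u M) hsub)

lemma Stmt8Aux.tau_eq_of_isLeast (s u : V) (b : ℕ) {M : ℝ}
    (h : IsLeast {L : ℝ | (b:ℝ) ≤ (Nat.card {p : List E // IsWalk src dst s u p ∧ (p.map w).sum ≤ L} : ℝ)} M) :
    tau src dst w s u (b : ℝ) = (M : EReal) := by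
  apply le_antisymm
  · exact sInf_le ⟨M, rfl, h.1⟩
  · apply le_sInf
    rintro x ⟨L, rfl, hL⟩
    exact EReal.coe_le_coe_iff.2 (h.2 hL)

lemma Stmt8Aux.setA_nonempty (s u : V) (b : ℕ)
    (h : tau src dst w s u (b : ℝ) ≠ ⊤) :
    {L : ℝ | (b:ℝ) ≤ (Nat.card {p : List E // IsWalk src dst s u p ∧ (p.map w).sum ≤ L} : ℝ)}.Nonempty := by
  by_contra he
  rw [Set.not_nonempty_iff_eq_empty] at he
  apply h
  rw [tau]
  convert sInf_empty
  · rfl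
  rw [Set.eq_empty_iff_forall_notMem]
  rintro x ⟨L, rfl, hL⟩
  exact Set.eq_empty_iff_forall_notMem.1 he L hL

lemma Stmt8Aux.exists_le_sum {ι : Type} (s : Finset ι) (g : ι → ℕ) :
    ∀ (a : ℕ), a ≤ ∑ i ∈ s, g i →
      ∃ f : ι → ℕ, (∀ i, f i ≤ g i) ∧ (∑ i ∈ s, f i) = a := by
  classical
  induction s using Finset.induction_on with
  | empty => intro a ha; simp at ha; exact ⟨fun _ => 0, fun _ => Nat.zero_le _, by simp [ha]⟩
  | insert _ _ hi =>
      rename_i i s _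
      intro a ha
      rw [Finset.sum_insert hi] at ha
      obtain ⟨f₀, hf₀, hsum⟩ := (by assumption : ∀ a ≤ ∑ j ∈ s, g j, ∃ f, _) (a - min a (g i))
        (by omega)
      refine ⟨Function.update f₀ i (min a (g i)), ?_, ?_⟩
      · intro j
        by_cases hj : j = i
        · subst hj; rw [Function.update_self]; exact min_le_right _ _
        · rw [Function.update_of_ne hj]; exact hf₀ j
      · rw [Finset.sum_insert hi, Function.update_self,
          Finset.sum_congr rfl (fun j hj => Function.update_of_ne (by rintro rfl; exact hi hj) _ f₀),
          hsum]
        omega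

end Aux

theorem stmt8
    {V E : Type} [Fintype V] [Fintype E] [DecidableEq V]
    (src dst : E → V) (w : E → ℝ)
    (ord : V → ℕ) (hacyc : ∀ e, ord (src e) < ord (dst e))
    (s : V) (v : V) (hv : v ≠ s) (a : ℕ) (ha : 1 ≤ a) :
    tau src dst w s v (a : ℝ) = sInf {x : EReal |
      ∃ f : E → ℕ,
        (∑ e ∈ Finset.univ.filter (fun e => dst e = v), f e) = a ∧
        x = (Finset.univ.filter (fun e => dst e = v)).sup
          (fun e => tau src dst w s (src e) (f e : ℝ) + (w e : EReal))} := by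
  set D := Finset.univ.filter (fun e => dst e = v) with hD
  have hdec := fun L : ℝ => Stmt8Aux.card_walk_decomp src dst w hacyc s v L hv
  apply le_antisymm
  · -- tau ≤ sInf RHS
    apply le_sInf
    rintro x ⟨f, hfsum, rfl⟩
    set M := D.sup (fun e => tau src dst w s (src e) (f e : ℝ) + (w e : EReal)) with hM
    by_cases hMtop : M = ⊤
    · rw [hMtop]; exact le_top
    -- M is not ⊥ : some coordinate has f e ≥ 1 and its term is a real number
    have hterm : ∀ e ∈ D, 1 ≤ f e →
        ∃ Me : ℝ, tau src dst w s (src e) (f e : ℝ) = (Me : EReal) ∧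
          (f e : ℝ) ≤ (Nat.card {p : List E // IsWalk src dst s (src e) p ∧ (p.map w).sum ≤ Me} : ℝ) ∧
          (Me : EReal) + (w e : EReal) ≤ M := by
      intro e he hfe
      have hle : tau src dst w s (src e) (f e : ℝ) + (w e : EReal) ≤ M :=
        Finset.le_sup (f := fun e => tau src dst w s (src e) ((f e : ℕ) : ℝ) + (w e : EReal)) he
      have htop : tau src dst w s (src e) (f e : ℝ) ≠ ⊤ := by
        intro h
        rw [h, EReal.top_add_coe] at hle
        exact hMtop (top_le_iff.1 hle)
      obtain ⟨Me, hMe⟩ := Stmt8Aux.exists_least src dst w hacyc s (src e) (f e) hfe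
        (Stmt8Aux.setA_nonempty src dst w s (src e) (f e) htop)
      have heq := Stmt8Aux.tau_eq_of_isLeast src dst w s (src e) (f e) hMe
      exact ⟨Me, heq, hMe.1, by rw [← heq]; exact hle⟩
    obtain ⟨e₀, he₀D, he₀⟩ : ∃ e ∈ D, f e ≠ 0 := by
      apply Finset.exists_ne_zero_of_sum_ne_zero
      rw [hfsum]; omega
    obtain ⟨M₀, hM₀eq, _, hM₀le⟩ := hterm e₀ he₀D (Nat.one_le_iff_ne_zero.2 he₀)
    have hMbot : M ≠ ⊥ := by
      intro h
      rw [h, le_bot_iff] at hM₀le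
      rw [← EReal.coe_add] at hM₀le
      exact EReal.coe_ne_bot _ hM₀le
    obtain ⟨r, hr⟩ : ∃ r : ℝ, M = (r : EReal) := ⟨M.toReal, (EReal.coe_toReal hMtop hMbot).symm⟩
    -- show a ≤ N v r
    have hpt : ∀ e ∈ D, f e ≤
        Nat.card {p : List E // IsWalk src dst s (src e) p ∧ (p.map w).sum ≤ r - w e} := by
      intro e he
      by_cases hfe : f e = 0
      · rw [hfe]; exact Nat.zero_le _
      obtain ⟨Me, _, hmem, hle⟩ := hterm e he (Nat.one_le_iff_ne_zero.2 hfe)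
      rw [hr, ← EReal.coe_add, EReal.coe_le_coe_iff] at hle
      have hMer : Me ≤ r - w e := by linarith
      have := Stmt8Aux.Ncard_mono src dst w hacyc s (src e) hMer
      have hmem' : f e ≤ Nat.card {p : List E // IsWalk src dst s (src e) p ∧ (p.map w).sum ≤ Me} := by
        exact_mod_cast hmem
      omega
    have hNv : a ≤ Nat.card {p : List E // IsWalk src dst s v p ∧ (p.map w).sum ≤ r} := by
      rw [hdec r, ← hfsum, ← hD]
      exact Finset.sum_le_sum hpt
    rw [hr]
    exact sInf_le ⟨r, rfl, by exact_mod_cast hNv⟩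
  · -- sInf RHS ≤ tau
    apply le_sInf
    rintro x ⟨L, rfl, hL⟩
    have hLnat : a ≤ Nat.card {p : List E // IsWalk src dst s v p ∧ (p.map w).sum ≤ L} := by
      exact_mod_cast hL
    rw [hdec L, ← hD] at hLnat
    obtain ⟨f, hfle, hfsum⟩ := Stmt8Aux.exists_le_sum D
      (fun e => Nat.card {q : List E // IsWalk src dst s (src e) q ∧ (q.map w).sum ≤ L - w e})
      a hLnat
    refine le_trans (sInf_le ⟨f, hfsum, rfl⟩) ?_
    apply Finset.sup_le
    intro e _
    have htau : tau src dst w s (src e) (f e : ℝ) ≤ ((L - w e : ℝ) : EReal) :=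
      sInf_le ⟨L - w e, rfl, by exact_mod_cast hfle e⟩
    calc tau src dst w s (src e) (f e : ℝ) + (w e : EReal)
        ≤ ((L - w e : ℝ) : EReal) + (w e : EReal) := add_le_add_left htau _
      _ = (L : EReal) := by rw [← EReal.coe_add]; norm_num
end
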